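/- (Theorem 1) Fix T₁, T₂, T₁', T₂', λ₁, λ₂, λ₁', λ₂' > 0 with T₂ ≥ T₁, T₂' ≥ T₁', and λ₁/T₁ = λ₂/T₂ > λ₁'/T₁' = λ₂'/T₂', and fix t₁ ≥ 0, t₁' ≥ 0. For each t ≥ max(t₁, t₁'), let N₁(t), N₂(t), N₁'(t), N₂'(t) be independent random variables with Poisson distributions of rates λ₁t₁, λ₂(t − t₁), λ₁'t₁', λ₂'(t − t₁') respectively, and let p(t) = P{ N₁'(t)/T₁' + N₂'(t)/T₂' > N₁(t)/T₁ + N₂(t)/T₂ }. Then p(t) tends to 0 as t → ∞. -/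

import Mathlib

open Real Filter Topology

/-- The probability mass function of a Poisson distribution with rate `μ ≥ 0`:
`P(N = n) = e^{-μ} μ^n / n!` (for rate `0` this puts all mass on `n = 0`). -/
noncomputable def poissonPMF (μ : ℝ) (n : ℕ) : ℝ :=
  Real.exp (-μ) * μ ^ n / n.factorial

/-- `winProb T₁ T₂ T₁' T₂' μ₁ μ₂ μ₁' μ₂'` is the probability that
`N₁'/T₁' + N₂'/T₂' > N₁/T₁ + N₂/T₂` where `N₁, N₂, N₁', N₂'` are independent Poisson random
variables with rates `μ₁, μ₂, μ₁', μ₂'` (independence makes the joint distribution the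
product of the marginals). -/
noncomputable def winProb (T₁ T₂ T₁' T₂' μ₁ μ₂ μ₁' μ₂' : ℝ) : ℝ :=
  ∑' q : ℕ × ℕ × ℕ × ℕ,
    if (q.2.2.1 : ℝ) / T₁' + (q.2.2.2 : ℝ) / T₂' > (q.1 : ℝ) / T₁ + (q.2.1 : ℝ) / T₂
    then poissonPMF μ₁ q.1 * poissonPMF μ₂ q.2.1 * poissonPMF μ₁' q.2.2.1 *
      poissonPMF μ₂' q.2.2.2
    else 0

lemma poissonPMF_nonneg {μ : ℝ} (hμ : 0 ≤ μ) (n : ℕ) : 0 ≤ poissonPMF μ n := by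
  unfold poissonPMF; positivity

lemma summable_poissonPMF (μ : ℝ) : Summable (poissonPMF μ) := by
  have : Summable (fun n : ℕ => Real.exp (-μ) * (μ ^ n / n.factorial)) :=
    (Real.summable_pow_div_factorial μ).mul_left _
  exact this.congr (fun n => by unfold poissonPMF; ring)

lemma tsum_pow_div_factorial (x : ℝ) : ∑' n : ℕ, x ^ n / n.factorial = Real.exp x := by
  rw [Real.exp_eq_exp_ℝ, NormedSpace.exp_eq_tsum_div]

lemma tsum_poissonPMF (μ : ℝ) : ∑' n, poissonPMF μ n = 1 := by
  have : ∑' n : ℕ, Real.exp (-μ) * (μ ^ n / n.factorial) = Real.exp (-μ) * Real.exp μ := by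
    rw [tsum_mul_left, tsum_pow_div_factorial]
  rw [show (poissonPMF μ) = fun n : ℕ => Real.exp (-μ) * (μ ^ n / n.factorial) from
    funext fun n => by unfold poissonPMF; ring, this, ← Real.exp_add]
  simp

lemma summable_mul_pow (x : ℝ) : Summable (fun n : ℕ => (n : ℝ) * x ^ n / n.factorial) := by
  rw [← summable_nat_add_iff 1]
  have : Summable (fun n : ℕ => x * (x ^ n / n.factorial)) :=
    (Real.summable_pow_div_factorial x).mul_left _
  refine this.congr fun n => ?_
  have h : ((n+1).factorial : ℝ) = (n+1) * n.factorial := by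
    rw [Nat.factorial_succ]; push_cast; ring
  field_simp [h]
  simp only [add_comm 1 n, Nat.factorial_succ]; push_cast; ring

lemma tsum_mul_pow (x : ℝ) : ∑' n : ℕ, (n : ℝ) * x ^ n / n.factorial = x * Real.exp x := by
  rw [Summable.tsum_eq_zero_add (summable_mul_pow x)]
  have h : ∀ n : ℕ, ((n:ℝ)+1) * x ^ (n+1) / (n+1).factorial = x * (x ^ n / n.factorial) := by
    intro n
    have h : ((n+1).factorial : ℝ) = (n+1) * n.factorial := by
      rw [Nat.factorial_succ]; push_cast; ring
    field_simp [h]; simp only [add_comm 1 n, Nat.factorial_succ]; push_cast; ring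
  simp only [Nat.cast_add, Nat.cast_one, Nat.cast_zero]
  rw [tsum_congr (fun n => h n), tsum_mul_left, tsum_pow_div_factorial]
  simp

lemma summable_sq_pow (x : ℝ) : Summable (fun n : ℕ => (n : ℝ)^2 * x ^ n / n.factorial) := by
  rw [← summable_nat_add_iff 1]
  have : Summable (fun n : ℕ => x * ((n:ℝ) * x ^ n / n.factorial) + x * (x ^ n / n.factorial)) :=
    ((summable_mul_pow x).mul_left x).add ((Real.summable_pow_div_factorial x).mul_left x)
  refine this.congr fun n => ?_
  have h : ((n+1).factorial : ℝ) = (n+1) * n.factorial := by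
    rw [Nat.factorial_succ]; push_cast; ring
  field_simp [h]; simp only [add_comm 1 n, Nat.factorial_succ]; push_cast; ring

lemma tsum_sq_pow (x : ℝ) :
    ∑' n : ℕ, (n : ℝ)^2 * x ^ n / n.factorial = (x^2 + x) * Real.exp x := by
  rw [Summable.tsum_eq_zero_add (summable_sq_pow x)]
  have h : ∀ n : ℕ, ((n:ℝ)+1)^2 * x ^ (n+1) / (n+1).factorial
      = x * ((n:ℝ) * x ^ n / n.factorial) + x * (x ^ n / n.factorial) := by
    intro n
    have h : ((n+1).factorial : ℝ) = (n+1) * n.factorial := by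
      rw [Nat.factorial_succ]; push_cast; ring
    field_simp [h]; simp only [add_comm 1 n, Nat.factorial_succ]; push_cast; ring
  simp only [Nat.cast_add, Nat.cast_one, Nat.cast_zero]
  rw [tsum_congr (fun n => h n),
    Summable.tsum_add ((summable_mul_pow x).mul_left x) ((Real.summable_pow_div_factorial x).mul_left x),
    tsum_mul_left, tsum_mul_left, tsum_mul_pow, tsum_pow_div_factorial]
  ring

lemma summable_var (μ : ℝ) : Summable (fun n : ℕ => ((n:ℝ) - μ)^2 * poissonPMF μ n) := by
  have : Summable (fun n : ℕ =>
      Real.exp (-μ) * ((n:ℝ)^2 * μ ^ n / n.factorial)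
      - (2*μ*Real.exp (-μ)) * ((n:ℝ) * μ ^ n / n.factorial)
      + (μ^2*Real.exp (-μ)) * (μ ^ n / n.factorial)) :=
    (((summable_sq_pow μ).mul_left _).sub ((summable_mul_pow μ).mul_left _)).add
      ((Real.summable_pow_div_factorial μ).mul_left _)
  refine this.congr fun n => ?_
  unfold poissonPMF; ring

lemma tsum_var (μ : ℝ) : ∑' n : ℕ, ((n:ℝ) - μ)^2 * poissonPMF μ n = μ := by
  have h : (fun n : ℕ => ((n:ℝ) - μ)^2 * poissonPMF μ n) = fun n : ℕ =>
      Real.exp (-μ) * ((n:ℝ)^2 * μ ^ n / n.factorial)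
      - (2*μ*Real.exp (-μ)) * ((n:ℝ) * μ ^ n / n.factorial)
      + (μ^2*Real.exp (-μ)) * (μ ^ n / n.factorial) := by
    funext n; unfold poissonPMF; ring
  rw [h, Summable.tsum_add ((((summable_sq_pow μ).mul_left _)).sub ((summable_mul_pow μ).mul_left _))
      ((Real.summable_pow_div_factorial μ).mul_left _),
    Summable.tsum_sub ((summable_sq_pow μ).mul_left _) ((summable_mul_pow μ).mul_left _),
    tsum_mul_left, tsum_mul_left, tsum_mul_left, tsum_sq_pow, tsum_mul_pow,
    tsum_pow_div_factorial]
  have e : Real.exp (-μ) * Real.exp μ = 1 := by rw [← Real.exp_add]; simp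
  linear_combination μ * e

/-- scaled variance pmf -/
noncomputable def vPMF (μ T s : ℝ) (n : ℕ) : ℝ := (((n:ℝ) - μ)/T)^2/s^2 * poissonPMF μ n

lemma vPMF_nonneg {μ : ℝ} (hμ : 0 ≤ μ) (T s : ℝ) (n : ℕ) : 0 ≤ vPMF μ T s n :=
  mul_nonneg (by positivity) (poissonPMF_nonneg hμ n)

lemma summable_vPMF (μ T s : ℝ) : Summable (vPMF μ T s) := by
  refine ((summable_var μ).mul_left (1/(T^2*s^2))).congr fun n => ?_
  unfold vPMF; rw [div_pow, div_div]; ring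

lemma tsum_vPMF (μ T s : ℝ) : ∑' n, vPMF μ T s n = μ/(T^2*s^2) := by
  have h : vPMF μ T s = fun n : ℕ => (1/(T^2*s^2)) * (((n:ℝ) - μ)^2 * poissonPMF μ n) := by
    funext n; unfold vPMF; rw [div_pow, div_div]; ring
  rw [h, tsum_mul_left, tsum_var]; ring

section prod4
variable {a b c d : ℕ → ℝ}

lemma summable4 (ha : Summable a) (hb : Summable b) (hc : Summable c) (hd : Summable d)
    (pa : ∀ n, 0 ≤ a n) (pb : ∀ n, 0 ≤ b n) (pc : ∀ n, 0 ≤ c n) (pd : ∀ n, 0 ≤ d n) :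
    Summable (fun q : ℕ × ℕ × ℕ × ℕ => a q.1 * (b q.2.1 * (c q.2.2.1 * d q.2.2.2))) := by
  have hcd : Summable (fun p : ℕ × ℕ => c p.1 * d p.2) := hc.mul_of_nonneg hd pc pd
  have hbcd : Summable (fun p : ℕ × ℕ × ℕ => b p.1 * (c p.2.1 * d p.2.2)) := by
    have h := hb.mul_of_nonneg hcd pb (fun p => mul_nonneg (pc _) (pd _))
    exact h.congr fun p => rfl
  have h2 := ha.mul_of_nonneg hbcd pa
    (fun p => mul_nonneg (pb _) (mul_nonneg (pc _) (pd _)))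
  exact h2.congr fun q => rfl

lemma norm_of_summable {f : ℕ → ℝ} (h : Summable f) (h0 : ∀ n, 0 ≤ f n) :
    Summable (fun n => ‖f n‖) := h.congr fun n => (Real.norm_of_nonneg (h0 n)).symm

lemma norm_of_summable' {α : Type*} {f : α → ℝ} (h : Summable f) (h0 : ∀ n, 0 ≤ f n) :
    Summable (fun n => ‖f n‖) := h.congr fun n => (Real.norm_of_nonneg (h0 n)).symm

lemma tsum4 (ha : Summable a) (hb : Summable b) (hc : Summable c) (hd : Summable d)
    (pa : ∀ n, 0 ≤ a n) (pb : ∀ n, 0 ≤ b n) (pc : ∀ n, 0 ≤ c n) (pd : ∀ n, 0 ≤ d n) :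
    ∑' q : ℕ × ℕ × ℕ × ℕ, a q.1 * (b q.2.1 * (c q.2.2.1 * d q.2.2.2))
      = (∑' n, a n) * ((∑' n, b n) * ((∑' n, c n) * (∑' n, d n))) := by
  have hcd : Summable (fun p : ℕ × ℕ => c p.1 * d p.2) := hc.mul_of_nonneg hd pc pd
  have hbcd : Summable (fun p : ℕ × ℕ × ℕ => b p.1 * (c p.2.1 * d p.2.2)) := by
    have h := hb.mul_of_nonneg hcd pb (fun p => mul_nonneg (pc _) (pd _))
    exact h.congr fun p => rfl
  have ecd : ((∑' n, c n) * (∑' n, d n)) = ∑' p : ℕ × ℕ, c p.1 * d p.2 :=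
    tsum_mul_tsum_of_summable_norm (norm_of_summable hc pc) (norm_of_summable hd pd)
  have ebcd : ((∑' n, b n) * (∑' p : ℕ × ℕ, c p.1 * d p.2))
      = ∑' p : ℕ × ℕ × ℕ, b p.1 * (c p.2.1 * d p.2.2) :=
    tsum_mul_tsum_of_summable_norm (norm_of_summable hb pb)
      (norm_of_summable' hcd (fun p => mul_nonneg (pc _) (pd _)))
  have eabcd : ((∑' n, a n) * (∑' p : ℕ × ℕ × ℕ, b p.1 * (c p.2.1 * d p.2.2)))
      = ∑' q : ℕ × ℕ × ℕ × ℕ, a q.1 * (b q.2.1 * (c q.2.2.1 * d q.2.2.2)) :=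
    tsum_mul_tsum_of_summable_norm (norm_of_summable ha pa)
      (norm_of_summable' hbcd (fun p => mul_nonneg (pb _) (mul_nonneg (pc _) (pd _))))
  rw [← eabcd, ← ebcd, ← ecd]

end prod4

lemma Qbound (T₁ T₂ T₁' T₂' μ₁ μ₂ μ₃ μ₄ s : ℝ) (hs : 0 < s)
    (hgap : μ₃/T₁' + μ₄/T₂' + 4*s ≤ μ₁/T₁ + μ₂/T₂) (x₁ x₂ x₃ x₄ : ℝ)
    (hc : x₃/T₁' + x₄/T₂' > x₁/T₁ + x₂/T₂) :
    s^2 ≤ ((x₁ - μ₁)/T₁)^2 + ((x₂ - μ₂)/T₂)^2 + ((x₃ - μ₃)/T₁')^2 + ((x₄ - μ₄)/T₂')^2 := by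
  set a₁ : ℝ := (x₁ - μ₁)/T₁ with ha₁
  set a₂ : ℝ := (x₂ - μ₂)/T₂ with ha₂
  set a₃ : ℝ := (x₃ - μ₃)/T₁' with ha₃
  set a₄ : ℝ := (x₄ - μ₄)/T₂' with ha₄
  have e₁ : a₁ = x₁/T₁ - μ₁/T₁ := by rw [ha₁, sub_div]
  have e₂ : a₂ = x₂/T₂ - μ₂/T₂ := by rw [ha₂, sub_div]
  have e₃ : a₃ = x₃/T₁' - μ₃/T₁' := by rw [ha₃, sub_div]
  have e₄ : a₄ = x₄/T₂' - μ₄/T₂' := by rw [ha₄, sub_div]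
  have hsum : 4*s < a₃ + a₄ + (-a₁) + (-a₂) := by
    rw [e₁, e₂, e₃, e₄]; linarith
  have halt : a₃ > s ∨ a₄ > s ∨ -a₁ > s ∨ -a₂ > s := by
    by_contra h
    push_neg at h
    obtain ⟨u₁, u₂, u₃, u₄⟩ := h
    linarith
  clear hsum e₁ e₂ e₃ e₄ hc hgap ha₁ ha₂ ha₃ ha₄
  rcases halt with h | h | h | h
  · nlinarith [sq_nonneg a₁, sq_nonneg a₂, sq_nonneg a₄]
  · nlinarith [sq_nonneg a₁, sq_nonneg a₂, sq_nonneg a₃]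
  · nlinarith [sq_nonneg a₂, sq_nonneg a₃, sq_nonneg a₄]
  · nlinarith [sq_nonneg a₁, sq_nonneg a₃, sq_nonneg a₄]

lemma winProb_le (T₁ T₂ T₁' T₂' μ₁ μ₂ μ₃ μ₄ s : ℝ)
    (hT₁ : 0 < T₁) (hT₂ : 0 < T₂) (hT₁' : 0 < T₁') (hT₂' : 0 < T₂')
    (hμ₁ : 0 ≤ μ₁) (hμ₂ : 0 ≤ μ₂) (hμ₃ : 0 ≤ μ₃) (hμ₄ : 0 ≤ μ₄) (hs : 0 < s)
    (hgap : μ₃/T₁' + μ₄/T₂' + 4*s ≤ μ₁/T₁ + μ₂/T₂) :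
    winProb T₁ T₂ T₁' T₂' μ₁ μ₂ μ₃ μ₄
      ≤ (μ₁/T₁^2 + μ₂/T₂^2 + μ₃/T₁'^2 + μ₄/T₂'^2)/s^2 := by
  set f₁ := poissonPMF μ₁ with hf₁
  set f₂ := poissonPMF μ₂ with hf₂
  set f₃ := poissonPMF μ₃ with hf₃
  set f₄ := poissonPMF μ₄ with hf₄
  set g₁ := vPMF μ₁ T₁ s with hg₁
  set g₂ := vPMF μ₂ T₂ s with hg₂
  set g₃ := vPMF μ₃ T₁' s with hg₃
  set g₄ := vPMF μ₄ T₂' s with hg₄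
  have p₁ : ∀ n, 0 ≤ f₁ n := poissonPMF_nonneg hμ₁
  have p₂ : ∀ n, 0 ≤ f₂ n := poissonPMF_nonneg hμ₂
  have p₃ : ∀ n, 0 ≤ f₃ n := poissonPMF_nonneg hμ₃
  have p₄ : ∀ n, 0 ≤ f₄ n := poissonPMF_nonneg hμ₄
  have q₁ : ∀ n, 0 ≤ g₁ n := vPMF_nonneg hμ₁ T₁ s
  have q₂ : ∀ n, 0 ≤ g₂ n := vPMF_nonneg hμ₂ T₂ s
  have q₃ : ∀ n, 0 ≤ g₃ n := vPMF_nonneg hμ₃ T₁' s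
  have q₄ : ∀ n, 0 ≤ g₄ n := vPMF_nonneg hμ₄ T₂' s
  have sf₁ : Summable f₁ := summable_poissonPMF μ₁
  have sf₂ : Summable f₂ := summable_poissonPMF μ₂
  have sf₃ : Summable f₃ := summable_poissonPMF μ₃
  have sf₄ : Summable f₄ := summable_poissonPMF μ₄
  have sg₁ : Summable g₁ := summable_vPMF μ₁ T₁ s
  have sg₂ : Summable g₂ := summable_vPMF μ₂ T₂ s
  have sg₃ : Summable g₃ := summable_vPMF μ₃ T₁' s
  have sg₄ : Summable g₄ := summable_vPMF μ₄ T₂' s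
  set G : ℕ × ℕ × ℕ × ℕ → ℝ := fun q =>
      g₁ q.1 * (f₂ q.2.1 * (f₃ q.2.2.1 * f₄ q.2.2.2))
    + f₁ q.1 * (g₂ q.2.1 * (f₃ q.2.2.1 * f₄ q.2.2.2))
    + f₁ q.1 * (f₂ q.2.1 * (g₃ q.2.2.1 * f₄ q.2.2.2))
    + f₁ q.1 * (f₂ q.2.1 * (f₃ q.2.2.1 * g₄ q.2.2.2)) with hG
  have S1 := summable4 sg₁ sf₂ sf₃ sf₄ q₁ p₂ p₃ p₄
  have S2 := summable4 sf₁ sg₂ sf₃ sf₄ p₁ q₂ p₃ p₄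
  have S3 := summable4 sf₁ sf₂ sg₃ sf₄ p₁ p₂ q₃ p₄
  have S4 := summable4 sf₁ sf₂ sf₃ sg₄ p₁ p₂ p₃ q₄
  have SG : Summable G := ((S1.add S2).add S3).add S4
  have hle : ∀ q : ℕ × ℕ × ℕ × ℕ,
      (if (q.2.2.1 : ℝ) / T₁' + (q.2.2.2 : ℝ) / T₂' > (q.1 : ℝ) / T₁ + (q.2.1 : ℝ) / T₂
      then f₁ q.1 * f₂ q.2.1 * f₃ q.2.2.1 * f₄ q.2.2.2 else 0) ≤ G q := by
    rintro ⟨n₁, n₂, n₃, n₄⟩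
    have Gval : G (n₁, n₂, n₃, n₄)
        = (f₁ n₁ * f₂ n₂ * f₃ n₃ * f₄ n₄) *
          ((((n₁:ℝ) - μ₁)/T₁)^2 + (((n₂:ℝ) - μ₂)/T₂)^2 + (((n₃:ℝ) - μ₃)/T₁')^2
            + (((n₄:ℝ) - μ₄)/T₂')^2) / s^2 := by
      simp only [hG, hg₁, hg₂, hg₃, hg₄, vPMF]
      ring
    split_ifs with hc
    · -- condition holds
      simp only at hc
      have hone : s^2 ≤ (((n₁:ℝ) - μ₁)/T₁)^2 + (((n₂:ℝ) - μ₂)/T₂)^2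
          + (((n₃:ℝ) - μ₃)/T₁')^2 + (((n₄:ℝ) - μ₄)/T₂')^2 :=
        Qbound T₁ T₂ T₁' T₂' μ₁ μ₂ μ₃ μ₄ s hs hgap _ _ _ _ hc
      have hw : 0 ≤ f₁ n₁ * f₂ n₂ * f₃ n₃ * f₄ n₄ :=
        mul_nonneg (mul_nonneg (mul_nonneg (p₁ _) (p₂ _)) (p₃ _)) (p₄ _)
      have h1 : (1:ℝ) ≤ ((((n₁:ℝ) - μ₁)/T₁)^2 + (((n₂:ℝ) - μ₂)/T₂)^2
          + (((n₃:ℝ) - μ₃)/T₁')^2 + (((n₄:ℝ) - μ₄)/T₂')^2) / s^2 :=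
        (one_le_div (by positivity)).2 hone
      show f₁ n₁ * f₂ n₂ * f₃ n₃ * f₄ n₄ ≤ G (n₁, n₂, n₃, n₄)
      calc f₁ n₁ * f₂ n₂ * f₃ n₃ * f₄ n₄
          = f₁ n₁ * f₂ n₂ * f₃ n₃ * f₄ n₄ * 1 := by ring
        _ ≤ f₁ n₁ * f₂ n₂ * f₃ n₃ * f₄ n₄ * (((((n₁:ℝ) - μ₁)/T₁)^2 + (((n₂:ℝ) - μ₂)/T₂)^2
          + (((n₃:ℝ) - μ₃)/T₁')^2 + (((n₄:ℝ) - μ₄)/T₂')^2) / s^2) :=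
            mul_le_mul_of_nonneg_left h1 hw
        _ = G (n₁, n₂, n₃, n₄) := by rw [Gval]; ring
    · rw [Gval]
      have hw : 0 ≤ f₁ n₁ * f₂ n₂ * f₃ n₃ * f₄ n₄ :=
        mul_nonneg (mul_nonneg (mul_nonneg (p₁ _) (p₂ _)) (p₃ _)) (p₄ _)
      exact div_nonneg (mul_nonneg hw (by positivity)) (by positivity)
  have hF0 : ∀ q : ℕ × ℕ × ℕ × ℕ,
      0 ≤ (if (q.2.2.1:ℝ)/T₁' + (q.2.2.2:ℝ)/T₂' > (q.1:ℝ)/T₁ + (q.2.1:ℝ)/T₂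
        then f₁ q.1 * f₂ q.2.1 * f₃ q.2.2.1 * f₄ q.2.2.2 else 0) := by
    intro q
    split_ifs with h
    · exact mul_nonneg (mul_nonneg (mul_nonneg (p₁ _) (p₂ _)) (p₃ _)) (p₄ _)
    · exact le_rfl
  have hwv : winProb T₁ T₂ T₁' T₂' μ₁ μ₂ μ₃ μ₄ ≤ ∑' q, G q := by
    unfold winProb
    exact Summable.tsum_le_tsum hle (Summable.of_nonneg_of_le hF0 hle SG) SG
  have hGval : ∑' q, G q = (μ₁/T₁^2 + μ₂/T₂^2 + μ₃/T₁'^2 + μ₄/T₂'^2)/s^2 := by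
    have e1 := tsum4 sg₁ sf₂ sf₃ sf₄ q₁ p₂ p₃ p₄
    have e2 := tsum4 sf₁ sg₂ sf₃ sf₄ p₁ q₂ p₃ p₄
    have e3 := tsum4 sf₁ sf₂ sg₃ sf₄ p₁ p₂ q₃ p₄
    have e4 := tsum4 sf₁ sf₂ sf₃ sg₄ p₁ p₂ p₃ q₄
    rw [hG]
    rw [Summable.tsum_add ((S1.add S2).add S3) S4, Summable.tsum_add (S1.add S2) S3, Summable.tsum_add S1 S2,
      e1, e2, e3, e4, hf₁, hf₂, hf₃, hf₄, hg₁, hg₂, hg₃, hg₄,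
      tsum_poissonPMF, tsum_poissonPMF, tsum_poissonPMF, tsum_poissonPMF,
      tsum_vPMF, tsum_vPMF, tsum_vPMF, tsum_vPMF]
    field_simp
  linarith [hwv, le_of_eq hGval]

lemma winProb_nonneg (T₁ T₂ T₁' T₂' μ₁ μ₂ μ₃ μ₄ : ℝ)
    (hμ₁ : 0 ≤ μ₁) (hμ₂ : 0 ≤ μ₂) (hμ₃ : 0 ≤ μ₃) (hμ₄ : 0 ≤ μ₄) :
    0 ≤ winProb T₁ T₂ T₁' T₂' μ₁ μ₂ μ₃ μ₄ := by
  unfold winProb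
  refine tsum_nonneg fun q => ?_
  split_ifs with h
  · exact mul_nonneg (mul_nonneg (mul_nonneg (poissonPMF_nonneg hμ₁ _)
      (poissonPMF_nonneg hμ₂ _)) (poissonPMF_nonneg hμ₃ _)) (poissonPMF_nonneg hμ₄ _)
  · exact le_rfl


/-- Theorem 1: Fix `T₁, T₂, T₁', T₂', λ₁, λ₂, λ₁', λ₂' > 0` with `T₂ ≥ T₁`,
`T₂' ≥ T₁'` and `λ₁/T₁ = λ₂/T₂ > λ₁'/T₁' = λ₂'/T₂'`, and fix `t₁ ≥ 0`, `t₁' ≥ 0`. For each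
challenge period `t`, let `p(t)` be the probability that the malicious prover's overall
difficulty `N₁'(t)/T₁' + N₂'(t)/T₂'` exceeds the honest prover's overall difficulty
`N₁(t)/T₁ + N₂(t)/T₂`, where the four variables are independent Poisson with rates
`λ₁t₁, λ₂(t−t₁), λ₁'t₁', λ₂'(t−t₁')`. Then `p(t) → 0` as `t → ∞`. -/
theorem theorem1 (T₁ T₂ T₁' T₂' lam₁ lam₂ lam₁' lam₂' : ℝ)
    (hT₁ : 0 < T₁) (hT₂ : 0 < T₂) (hT₁' : 0 < T₁') (hT₂' : 0 < T₂')
    (hlam₁ : 0 < lam₁) (hlam₂ : 0 < lam₂) (hlam₁' : 0 < lam₁') (hlam₂' : 0 < lam₂')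
    (hT : T₁ ≤ T₂) (hT' : T₁' ≤ T₂')
    (hrate : lam₁ / T₁ = lam₂ / T₂) (hrate' : lam₁' / T₁' = lam₂' / T₂')
    (hlt : lam₁' / T₁' < lam₁ / T₁)
    (t₁ t₁' : ℝ) (ht₁ : 0 ≤ t₁) (ht₁' : 0 ≤ t₁')
    (p : ℝ → ℝ)
    (hp : ∀ t, max t₁ t₁' ≤ t →
      p t = winProb T₁ T₂ T₁' T₂' (lam₁ * t₁) (lam₂ * (t - t₁)) (lam₁' * t₁')
        (lam₂' * (t - t₁'))) :
    Tendsto p atTop (𝓝 0) := by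
  obtain ⟨r, hr⟩ : ∃ x : ℝ, x = lam₁ / T₁ := ⟨_, rfl⟩
  obtain ⟨r', hr'⟩ : ∃ x : ℝ, x = lam₁' / T₁' := ⟨_, rfl⟩
  have hl1 : lam₁ = r * T₁ := by rw [hr]; field_simp
  have hl2 : lam₂ = r * T₂ := by rw [hr, hrate]; field_simp
  have hl1' : lam₁' = r' * T₁' := by rw [hr']; field_simp
  have hl2' : lam₂' = r' * T₂' := by rw [hr', hrate']; field_simp
  have hδ : 0 < r - r' := by rw [hr, hr']; linarith
  set K₁ : ℝ := 16*(lam₂/T₂^2 + lam₂'/T₂'^2)/(r - r')^2 with hK₁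
  set K₂ : ℝ := 16*(lam₁*t₁/T₁^2 + lam₁'*t₁'/T₁'^2)/(r - r')^2 with hK₂
  have hhtend : Tendsto (fun t : ℝ => K₁ * t⁻¹ + K₂ * (t⁻¹ * t⁻¹)) atTop (𝓝 0) := by
    have hi : Tendsto (fun t : ℝ => t⁻¹) atTop (𝓝 (0:ℝ)) := tendsto_inv_atTop_zero
    have := ((hi.const_mul K₁).add ((hi.mul hi).const_mul K₂))
    simpa using this
  apply tendsto_of_tendsto_of_tendsto_of_le_of_le' tendsto_const_nhds hhtend
  · -- 0 ≤ p t eventually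
    filter_upwards [eventually_ge_atTop (max (max t₁ t₁') 1)] with t ht
    have hm : max t₁ t₁' ≤ t := le_trans (le_max_left _ _) ht
    have htt₁ : t₁ ≤ t := le_trans (le_max_left _ _) hm
    have htt₁' : t₁' ≤ t := le_trans (le_max_right _ _) hm
    rw [hp t hm]
    exact winProb_nonneg _ _ _ _ _ _ _ _ (by positivity)
      (mul_nonneg hlam₂.le (by linarith)) (by positivity)
      (mul_nonneg hlam₂'.le (by linarith))
  · -- p t ≤ h t eventually
    filter_upwards [eventually_ge_atTop (max (max t₁ t₁') 1)] with t ht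
    have hm : max t₁ t₁' ≤ t := le_trans (le_max_left _ _) ht
    have htt₁ : t₁ ≤ t := le_trans (le_max_left _ _) hm
    have htt₁' : t₁' ≤ t := le_trans (le_max_right _ _) hm
    have ht1 : (1:ℝ) ≤ t := le_trans (le_max_right _ _) ht
    have ht0 : 0 < t := lt_of_lt_of_le one_pos ht1
    rw [hp t hm]
    have hs : 0 < (r - r') * t / 4 := by positivity
    have hgap : (lam₁'*t₁')/T₁' + (lam₂'*(t - t₁'))/T₂' + 4*((r - r')*t/4)
        ≤ (lam₁*t₁)/T₁ + (lam₂*(t - t₁))/T₂ := by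
      apply le_of_eq
      rw [hl1, hl2, hl1', hl2']
      field_simp
      ring
    have h1 := winProb_le T₁ T₂ T₁' T₂' (lam₁*t₁) (lam₂*(t - t₁)) (lam₁'*t₁')
      (lam₂'*(t - t₁')) ((r - r')*t/4) hT₁ hT₂ hT₁' hT₂' (by positivity)
      (mul_nonneg hlam₂.le (by linarith)) (by positivity)
      (mul_nonneg hlam₂'.le (by linarith)) hs hgap
    refine le_trans h1 ?_
    have hnum : (lam₁*t₁)/T₁^2 + (lam₂*(t - t₁))/T₂^2 + (lam₁'*t₁')/T₁'^2
        + (lam₂'*(t - t₁'))/T₂'^2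
        ≤ lam₁*t₁/T₁^2 + lam₁'*t₁'/T₁'^2 + (lam₂/T₂^2 + lam₂'/T₂'^2)*t := by
      have b1 : lam₂*(t - t₁)/T₂^2 ≤ lam₂*t/T₂^2 := by
        gcongr
        linarith
      have b2 : lam₂'*(t - t₁')/T₂'^2 ≤ lam₂'*t/T₂'^2 := by
        gcongr
        linarith
      have e : (lam₂/T₂^2 + lam₂'/T₂'^2)*t = lam₂*t/T₂^2 + lam₂'*t/T₂'^2 := by ring
      linarith
    have hdiv : ((lam₁*t₁)/T₁^2 + (lam₂*(t - t₁))/T₂^2 + (lam₁'*t₁')/T₁'^2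
        + (lam₂'*(t - t₁'))/T₂'^2) / ((r - r')*t/4)^2
        ≤ (lam₁*t₁/T₁^2 + lam₁'*t₁'/T₁'^2 + (lam₂/T₂^2 + lam₂'/T₂'^2)*t) / ((r - r')*t/4)^2 :=
      (div_le_div_iff_of_pos_right (by positivity)).2 hnum
    refine le_trans hdiv (le_of_eq ?_)
    rw [hK₁, hK₂]
    field_simp
    ring
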